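/- Let Δ, Λ₁, Λ₂ : ℝ⁴ → ℂ be C¹ with Δ vanishing nowhere. Then for every C² function f : ℝ⁴ → ℂ one has i·(L(L̄ f) − L̄(L f)) = (Υ₁/(Δ² Δ̄²)) f_{u₁} + (Υ₂/(Δ² Δ̄²)) f_{u₂}, where for j = 1, 2: Υ_j := i·( Δ·Δ·Δ̄·(Λ̄_j)_z + Δ·Δ̄·Λ₁·(Λ̄_j)_{u₁} + Δ·Δ̄·Λ₂·(Λ̄_j)_{u₂} − Δ·Δ·(Δ̄)_z·Λ̄_j − Δ·Λ₁·(Δ̄)_{u₁}·Λ̄_j − Δ·Λ₂·(Δ̄)_{u₂}·Λ̄_j − Δ·Δ̄·Δ̄·(Λ_j)_{z̄} − Δ·Δ̄·Λ̄₁·(Λ_j)_{u₁} − Δ·Δ̄·Λ̄₂·(Λ_j)_{u₂} + Δ̄·Δ̄·Δ_{z̄}·Λ_j + Δ̄·Λ̄₁·Δ_{u₁}·Λ_j + Δ̄·Λ̄₂·Δ_{u₂}·Λ_j ). (This is the paper's Lemma giving T = i[L, L̄] explicitly for General Class II.) -/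

import Mathlib

noncomputable section
open Complex ComplexConjugate

/-- Points of `ℝ⁴`, with coordinates `(x, y, u₁, u₂)` and `z = x + i y`. -/
abbrev V4 := Fin 4 → ℝ

/-- Partial derivative in the `j`-th coordinate direction. -/
def pd (j : Fin 4) (f : V4 → ℂ) : V4 → ℂ := fun p => fderiv ℝ f p (Pi.single j 1)

/-- Wirtinger derivative `f_z := (f_x − i f_y)/2`. -/
def wz (f : V4 → ℂ) : V4 → ℂ := fun p => (pd 0 f p - I * pd 1 f p) / 2

/-- Wirtinger derivative `f_z̄ := (f_x + i f_y)/2`. -/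
def wzb (f : V4 → ℂ) : V4 → ℂ := fun p => (pd 0 f p + I * pd 1 f p) / 2

/-- Partial derivative `f_{u₁}`. -/
def du1 (f : V4 → ℂ) : V4 → ℂ := pd 2 f

/-- Partial derivative `f_{u₂}`. -/
def du2 (f : V4 → ℂ) : V4 → ℂ := pd 3 f

section pdcalc

variable {f g : V4 → ℂ} {p : V4} {j i : Fin 4}

lemma pd_add (hf : DifferentiableAt ℝ f p) (hg : DifferentiableAt ℝ g p) :
    pd j (fun q => f q + g q) p = pd j f p + pd j g p := by
  simp [pd, fderiv_fun_add hf hg]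

lemma pd_sub (hf : DifferentiableAt ℝ f p) (hg : DifferentiableAt ℝ g p) :
    pd j (fun q => f q - g q) p = pd j f p - pd j g p := by
  simp [pd, fderiv_fun_sub hf hg]

lemma pd_const_mul (c : ℂ) (hf : DifferentiableAt ℝ f p) :
    pd j (fun q => c * f q) p = c * pd j f p := by
  simp [pd, fderiv_const_mul hf]

lemma pd_div_const (c : ℂ) (hf : DifferentiableAt ℝ f p) :
    pd j (fun q => f q / c) p = pd j f p / c := by
  simp only [div_eq_inv_mul, pd_const_mul c⁻¹ hf]

lemma pd_mul (hf : DifferentiableAt ℝ f p) (hg : DifferentiableAt ℝ g p) :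
    pd j (fun q => f q * g q) p = f p * pd j g p + g p * pd j f p := by
  simp [pd, fderiv_fun_mul hf hg, smul_eq_mul]

lemma pd_conj (hf : DifferentiableAt ℝ f p) :
    pd j (fun q => conj (f q)) p = conj (pd j f p) := by
  have h := (Complex.conjCLE.toContinuousLinearMap.hasFDerivAt.comp p hf.hasFDerivAt).fderiv
  simp only [pd]
  rw [show (fun q => conj (f q)) = (Complex.conjCLE.toContinuousLinearMap ∘ f) from rfl, h]
  rfl

lemma pd_inv (hg : DifferentiableAt ℝ g p) (h0 : g p ≠ 0) :
    pd j (fun q => (g q)⁻¹) p = -(pd j g p) / g p ^ 2 := by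
  have h := fderiv_comp (𝕜 := ℝ) p (differentiableAt_inv h0) hg
  simp only [pd]
  rw [show (fun q => (g q)⁻¹) = (Inv.inv ∘ g) from rfl, h, fderiv_inv' h0]
  simp [smul_eq_mul]
  ring

lemma pd_div (hf : DifferentiableAt ℝ f p) (hg : DifferentiableAt ℝ g p) (h0 : g p ≠ 0) :
    pd j (fun q => f q / g q) p = (pd j f p * g p - f p * pd j g p) / g p ^ 2 := by
  simp only [div_eq_mul_inv]
  rw [pd_mul (g := fun q => (g q)⁻¹) hf (hg.inv h0), pd_inv hg h0]
  field_simp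
  ring

lemma contDiff_pd (hf : ContDiff ℝ 2 f) : ContDiff ℝ 1 (pd j f) := by
  have h1 : ContDiff ℝ 1 (fderiv ℝ f) := hf.fderiv_right (by norm_num)
  exact h1.clm_apply contDiff_const

lemma pd_comm (hf : ContDiff ℝ 2 f) : pd i (pd j f) p = pd j (pd i f) p := by
  have h1 : ContDiff ℝ 1 (fderiv ℝ f) := hf.fderiv_right (by norm_num)
  have hd : DifferentiableAt ℝ (fderiv ℝ f) p := (h1.differentiable one_ne_zero) p
  have hsymm := (hf.contDiffAt (x := p)).isSymmSndFDerivAt (by simp [minSmoothness_of_isRCLikeNormedField])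
  rw [show pd j f = fun q => (fderiv ℝ f q) (Pi.single j 1) from rfl,
      show pd i f = fun q => (fderiv ℝ f q) (Pi.single i 1) from rfl]
  simp only [pd]
  rw [fderiv_clm_apply hd (differentiableAt_const _),
      fderiv_clm_apply hd (differentiableAt_const _)]
  simp [hsymm.eq]

end pdcalc

variable (Δ Λ₁ Λ₂ : V4 → ℂ)

/-- The operator `L f := f_z + (Λ₁/Δ) f_{u₁} + (Λ₂/Δ) f_{u₂}`. -/
def Lop (f : V4 → ℂ) : V4 → ℂ := fun p =>
  wz f p + Λ₁ p / Δ p * du1 f p + Λ₂ p / Δ p * du2 f p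

/-- The conjugate operator `L̄ f := f_z̄ + (Λ̄₁/Δ̄) f_{u₁} + (Λ̄₂/Δ̄) f_{u₂}`. -/
def Lbop (f : V4 → ℂ) : V4 → ℂ := fun p =>
  wzb f p + conj (Λ₁ p) / conj (Δ p) * du1 f p + conj (Λ₂ p) / conj (Δ p) * du2 f p

/-- The numerator `Υ` associated to one of the `Λ` coefficients. -/
def Ups (Λ : V4 → ℂ) : V4 → ℂ := fun p =>
  I * (Δ p * Δ p * conj (Δ p) * wz (fun q => conj (Λ q)) p
      + Δ p * conj (Δ p) * Λ₁ p * du1 (fun q => conj (Λ q)) p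
      + Δ p * conj (Δ p) * Λ₂ p * du2 (fun q => conj (Λ q)) p
      - Δ p * Δ p * wz (fun q => conj (Δ q)) p * conj (Λ p)
      - Δ p * Λ₁ p * du1 (fun q => conj (Δ q)) p * conj (Λ p)
      - Δ p * Λ₂ p * du2 (fun q => conj (Δ q)) p * conj (Λ p)
      - Δ p * conj (Δ p) * conj (Δ p) * wzb Λ p
      - Δ p * conj (Δ p) * conj (Λ₁ p) * du1 Λ p
      - Δ p * conj (Δ p) * conj (Λ₂ p) * du2 Λ p
      + conj (Δ p) * conj (Δ p) * wzb Δ p * Λ p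
      + conj (Δ p) * conj (Λ₁ p) * du1 Δ p * Λ p
      + conj (Δ p) * conj (Λ₂ p) * du2 Δ p * Λ p)

section main

variable {Δ Λ₁ Λ₂ : V4 → ℂ} {f : V4 → ℂ}

lemma pd_Lbop (hΔ : ContDiff ℝ 1 Δ) (hΛ₁ : ContDiff ℝ 1 Λ₁) (hΛ₂ : ContDiff ℝ 1 Λ₂)
    (hΔ0 : ∀ p, Δ p ≠ 0) (hf : ContDiff ℝ 2 f) (j : Fin 4) (p : V4) :
    pd j (Lbop Δ Λ₁ Λ₂ f) p =
      (pd j (pd 0 f) p + I * pd j (pd 1 f) p) / 2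
      + (conj (pd j Λ₁ p) * conj (Δ p) - conj (Λ₁ p) * conj (pd j Δ p)) / conj (Δ p) ^ 2 * pd 2 f p
      + conj (Λ₁ p) / conj (Δ p) * pd j (pd 2 f) p
      + (conj (pd j Λ₂ p) * conj (Δ p) - conj (Λ₂ p) * conj (pd j Δ p)) / conj (Δ p) ^ 2 * pd 3 f p
      + conj (Λ₂ p) / conj (Δ p) * pd j (pd 3 f) p := by
  have hdΔ : Differentiable ℝ Δ := hΔ.differentiable one_ne_zero
  have hdΛ₁ : Differentiable ℝ Λ₁ := hΛ₁.differentiable one_ne_zero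
  have hdΛ₂ : Differentiable ℝ Λ₂ := hΛ₂.differentiable one_ne_zero
  have hdpf : ∀ k : Fin 4, Differentiable ℝ (pd k f) :=
    fun k => (contDiff_pd hf).differentiable one_ne_zero
  have hcΔ0 : ∀ q, conj (Δ q) ≠ 0 := fun q => by simpa using hΔ0 q
  have hdcΔ : Differentiable ℝ (fun q => conj (Δ q)) := Complex.conjCLE.differentiable.comp hdΔ
  have hdcΛ₁ : Differentiable ℝ (fun q => conj (Λ₁ q)) := Complex.conjCLE.differentiable.comp hdΛ₁
  have hdcΛ₂ : Differentiable ℝ (fun q => conj (Λ₂ q)) := Complex.conjCLE.differentiable.comp hdΛ₂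
  have d0 : DifferentiableAt ℝ (fun q => (pd 0 f q + I * pd 1 f q) / 2) p := by
    simp only [div_eq_mul_inv]
    exact ((hdpf 0 p).add ((hdpf 1 p).const_mul I)).mul (differentiableAt_const _)
  have dB1 : DifferentiableAt ℝ (fun q => conj (Λ₁ q) / conj (Δ q)) p := by
    simp only [div_eq_mul_inv]
    exact (hdcΛ₁ p).mul ((hdcΔ p).inv (hcΔ0 p))
  have dB2 : DifferentiableAt ℝ (fun q => conj (Λ₂ q) / conj (Δ q)) p := by
    simp only [div_eq_mul_inv]
    exact (hdcΛ₂ p).mul ((hdcΔ p).inv (hcΔ0 p))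
  rw [show Lbop Δ Λ₁ Λ₂ f = fun q => ((pd 0 f q + I * pd 1 f q) / 2
      + conj (Λ₁ q) / conj (Δ q) * pd 2 f q) + conj (Λ₂ q) / conj (Δ q) * pd 3 f q from rfl]
  rw [pd_add (d0.fun_add (dB1.fun_mul (hdpf 2 p))) (dB2.fun_mul (hdpf 3 p)),
      pd_add d0 (dB1.fun_mul (hdpf 2 p)),
      pd_div_const _ ((hdpf 0 p).fun_add ((hdpf 1 p).const_mul I)),
      pd_add (hdpf 0 p) ((hdpf 1 p).const_mul I),
      pd_const_mul _ (hdpf 1 p),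
      pd_mul dB1 (hdpf 2 p),
      pd_mul dB2 (hdpf 3 p),
      pd_div (hdcΛ₁ p) (hdcΔ p) (hcΔ0 p),
      pd_div (hdcΛ₂ p) (hdcΔ p) (hcΔ0 p),
      pd_conj (hdΛ₁ p), pd_conj (hdΛ₂ p), pd_conj (hdΔ p)]
  ring

lemma pd_Lop (hΔ : ContDiff ℝ 1 Δ) (hΛ₁ : ContDiff ℝ 1 Λ₁) (hΛ₂ : ContDiff ℝ 1 Λ₂)
    (hΔ0 : ∀ p, Δ p ≠ 0) (hf : ContDiff ℝ 2 f) (j : Fin 4) (p : V4) :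
    pd j (Lop Δ Λ₁ Λ₂ f) p =
      (pd j (pd 0 f) p - I * pd j (pd 1 f) p) / 2
      + (pd j Λ₁ p * Δ p - Λ₁ p * pd j Δ p) / Δ p ^ 2 * pd 2 f p
      + Λ₁ p / Δ p * pd j (pd 2 f) p
      + (pd j Λ₂ p * Δ p - Λ₂ p * pd j Δ p) / Δ p ^ 2 * pd 3 f p
      + Λ₂ p / Δ p * pd j (pd 3 f) p := by
  have hdΔ : Differentiable ℝ Δ := hΔ.differentiable one_ne_zero
  have hdΛ₁ : Differentiable ℝ Λ₁ := hΛ₁.differentiable one_ne_zero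
  have hdΛ₂ : Differentiable ℝ Λ₂ := hΛ₂.differentiable one_ne_zero
  have hdpf : ∀ k : Fin 4, Differentiable ℝ (pd k f) :=
    fun k => (contDiff_pd hf).differentiable one_ne_zero
  have d0 : DifferentiableAt ℝ (fun q => (pd 0 f q - I * pd 1 f q) / 2) p := by
    simp only [div_eq_mul_inv]
    exact ((hdpf 0 p).sub ((hdpf 1 p).const_mul I)).mul (differentiableAt_const _)
  have dB1 : DifferentiableAt ℝ (fun q => Λ₁ q / Δ q) p := by
    simp only [div_eq_mul_inv]
    exact (hdΛ₁ p).mul ((hdΔ p).inv (hΔ0 p))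
  have dB2 : DifferentiableAt ℝ (fun q => Λ₂ q / Δ q) p := by
    simp only [div_eq_mul_inv]
    exact (hdΛ₂ p).mul ((hdΔ p).inv (hΔ0 p))
  rw [show Lop Δ Λ₁ Λ₂ f = fun q => ((pd 0 f q - I * pd 1 f q) / 2
      + Λ₁ q / Δ q * pd 2 f q) + Λ₂ q / Δ q * pd 3 f q from rfl]
  rw [pd_add (d0.fun_add (dB1.fun_mul (hdpf 2 p))) (dB2.fun_mul (hdpf 3 p)),
      pd_add d0 (dB1.fun_mul (hdpf 2 p)),
      pd_div_const _ ((hdpf 0 p).fun_sub ((hdpf 1 p).const_mul I)),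
      pd_sub (hdpf 0 p) ((hdpf 1 p).const_mul I),
      pd_const_mul _ (hdpf 1 p),
      pd_mul dB1 (hdpf 2 p),
      pd_mul dB2 (hdpf 3 p),
      pd_div (hdΛ₁ p) (hdΔ p) (hΔ0 p),
      pd_div (hdΛ₂ p) (hdΔ p) (hΔ0 p)]
  ring

end main

set_option maxHeartbeats 4000000 in
/-- The Lemma giving `T = i[L, L̄]` explicitly for General Class II:
`i·(L(L̄ f) − L̄(L f)) = (Υ₁/(Δ² Δ̄²)) f_{u₁} + (Υ₂/(Δ² Δ̄²)) f_{u₂}`. -/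
theorem class_II_T_explicit (hΔ : ContDiff ℝ 1 Δ) (hΛ₁ : ContDiff ℝ 1 Λ₁)
    (hΛ₂ : ContDiff ℝ 1 Λ₂) (hΔ0 : ∀ p, Δ p ≠ 0) :
    ∀ f : V4 → ℂ, ContDiff ℝ 2 f → ∀ p,
      I * (Lop Δ Λ₁ Λ₂ (Lbop Δ Λ₁ Λ₂ f) p - Lbop Δ Λ₁ Λ₂ (Lop Δ Λ₁ Λ₂ f) p)
        = Ups Δ Λ₁ Λ₂ Λ₁ p / (Δ p ^ 2 * conj (Δ p) ^ 2) * du1 f p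
          + Ups Δ Λ₁ Λ₂ Λ₂ p / (Δ p ^ 2 * conj (Δ p) ^ 2) * du2 f p := by
  intro f hf p
  have hdΔ : Differentiable ℝ Δ := hΔ.differentiable one_ne_zero
  have hdΛ₁ : Differentiable ℝ Λ₁ := hΛ₁.differentiable one_ne_zero
  have hdΛ₂ : Differentiable ℝ Λ₂ := hΛ₂.differentiable one_ne_zero
  have hcΔ0 : ∀ q, conj (Δ q) ≠ 0 := fun q => by simpa using hΔ0 q
  rw [show Lop Δ Λ₁ Λ₂ (Lbop Δ Λ₁ Λ₂ f) p
      = (pd 0 (Lbop Δ Λ₁ Λ₂ f) p - I * pd 1 (Lbop Δ Λ₁ Λ₂ f) p) / 2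
        + Λ₁ p / Δ p * pd 2 (Lbop Δ Λ₁ Λ₂ f) p
        + Λ₂ p / Δ p * pd 3 (Lbop Δ Λ₁ Λ₂ f) p from rfl,
      show Lbop Δ Λ₁ Λ₂ (Lop Δ Λ₁ Λ₂ f) p
      = (pd 0 (Lop Δ Λ₁ Λ₂ f) p + I * pd 1 (Lop Δ Λ₁ Λ₂ f) p) / 2
        + conj (Λ₁ p) / conj (Δ p) * pd 2 (Lop Δ Λ₁ Λ₂ f) p
        + conj (Λ₂ p) / conj (Δ p) * pd 3 (Lop Δ Λ₁ Λ₂ f) p from rfl]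
  rw [pd_Lbop hΔ hΛ₁ hΛ₂ hΔ0 hf 0 p, pd_Lbop hΔ hΛ₁ hΛ₂ hΔ0 hf 1 p,
      pd_Lbop hΔ hΛ₁ hΛ₂ hΔ0 hf 2 p, pd_Lbop hΔ hΛ₁ hΛ₂ hΔ0 hf 3 p,
      pd_Lop hΔ hΛ₁ hΛ₂ hΔ0 hf 0 p, pd_Lop hΔ hΛ₁ hΛ₂ hΔ0 hf 1 p,
      pd_Lop hΔ hΛ₁ hΛ₂ hΔ0 hf 2 p, pd_Lop hΔ hΛ₁ hΛ₂ hΔ0 hf 3 p]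
  rw [show Ups Δ Λ₁ Λ₂ Λ₁ p = I * (Δ p * Δ p * conj (Δ p)
        * ((pd 0 (fun q => conj (Λ₁ q)) p - I * pd 1 (fun q => conj (Λ₁ q)) p) / 2)
      + Δ p * conj (Δ p) * Λ₁ p * pd 2 (fun q => conj (Λ₁ q)) p
      + Δ p * conj (Δ p) * Λ₂ p * pd 3 (fun q => conj (Λ₁ q)) p
      - Δ p * Δ p * ((pd 0 (fun q => conj (Δ q)) p - I * pd 1 (fun q => conj (Δ q)) p) / 2) * conj (Λ₁ p)
      - Δ p * Λ₁ p * pd 2 (fun q => conj (Δ q)) p * conj (Λ₁ p)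
      - Δ p * Λ₂ p * pd 3 (fun q => conj (Δ q)) p * conj (Λ₁ p)
      - Δ p * conj (Δ p) * conj (Δ p) * ((pd 0 Λ₁ p + I * pd 1 Λ₁ p) / 2)
      - Δ p * conj (Δ p) * conj (Λ₁ p) * pd 2 Λ₁ p
      - Δ p * conj (Δ p) * conj (Λ₂ p) * pd 3 Λ₁ p
      + conj (Δ p) * conj (Δ p) * ((pd 0 Δ p + I * pd 1 Δ p) / 2) * Λ₁ p
      + conj (Δ p) * conj (Λ₁ p) * pd 2 Δ p * Λ₁ p
      + conj (Δ p) * conj (Λ₂ p) * pd 3 Δ p * Λ₁ p) from rfl,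
      show Ups Δ Λ₁ Λ₂ Λ₂ p = I * (Δ p * Δ p * conj (Δ p)
        * ((pd 0 (fun q => conj (Λ₂ q)) p - I * pd 1 (fun q => conj (Λ₂ q)) p) / 2)
      + Δ p * conj (Δ p) * Λ₁ p * pd 2 (fun q => conj (Λ₂ q)) p
      + Δ p * conj (Δ p) * Λ₂ p * pd 3 (fun q => conj (Λ₂ q)) p
      - Δ p * Δ p * ((pd 0 (fun q => conj (Δ q)) p - I * pd 1 (fun q => conj (Δ q)) p) / 2) * conj (Λ₂ p)
      - Δ p * Λ₁ p * pd 2 (fun q => conj (Δ q)) p * conj (Λ₂ p)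
      - Δ p * Λ₂ p * pd 3 (fun q => conj (Δ q)) p * conj (Λ₂ p)
      - Δ p * conj (Δ p) * conj (Δ p) * ((pd 0 Λ₂ p + I * pd 1 Λ₂ p) / 2)
      - Δ p * conj (Δ p) * conj (Λ₁ p) * pd 2 Λ₂ p
      - Δ p * conj (Δ p) * conj (Λ₂ p) * pd 3 Λ₂ p
      + conj (Δ p) * conj (Δ p) * ((pd 0 Δ p + I * pd 1 Δ p) / 2) * Λ₂ p
      + conj (Δ p) * conj (Λ₁ p) * pd 2 Δ p * Λ₂ p
      + conj (Δ p) * conj (Λ₂ p) * pd 3 Δ p * Λ₂ p) from rfl]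
  simp only [pd_conj (hdΛ₁ p), pd_conj (hdΛ₂ p), pd_conj (hdΔ p)]
  rw [show du1 f p = pd 2 f p from rfl, show du2 f p = pd 3 f p from rfl]
  rw [pd_comm (i := 1) (j := 0) hf, pd_comm (i := 2) (j := 0) hf,
      pd_comm (i := 3) (j := 0) hf, pd_comm (i := 2) (j := 1) hf,
      pd_comm (i := 3) (j := 1) hf, pd_comm (i := 3) (j := 2) hf]
  have h1 : Δ p ≠ 0 := hΔ0 p
  have h2 : conj (Δ p) ≠ 0 := hcΔ0 p
  have hia : Δ p * (Δ p)⁻¹ = 1 := mul_inv_cancel₀ h1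
  have hib : conj (Δ p) * (conj (Δ p))⁻¹ = 1 := mul_inv_cancel₀ h2
  linear_combination ((1/2 : ℂ) * I * (conj (Δ p))⁻¹ ^ 2 * conj (Λ₂ p) * conj (pd 0 Δ p) * pd 3 f p + (1/2 : ℂ) * I * (conj (Δ p))⁻¹ ^ 2 * conj (Λ₁ p) * conj (pd 0 Δ p) * pd 2 f p + (-1/2 : ℂ) * I * (Δ p)⁻¹ * pd 0 Λ₂ p * pd 3 f p + (-1/2 : ℂ) * I * (Δ p)⁻¹ * pd 0 Λ₁ p * pd 2 f p + (-1 : ℂ) * I * (Δ p)⁻¹ * (conj (Δ p))⁻¹ * conj (Λ₂ p) * pd 3 Λ₂ p * pd 3 f p + (-1 : ℂ) * I * (Δ p)⁻¹ * (conj (Δ p))⁻¹ * conj (Λ₂ p) * pd 3 Λ₁ p * pd 2 f p + (-1 : ℂ) * I * (Δ p)⁻¹ * (conj (Δ p))⁻¹ * conj (Λ₁ p) * pd 2 Λ₂ p * pd 3 f p + (-1 : ℂ) * I * (Δ p)⁻¹ * (conj (Δ p))⁻¹ * conj (Λ₁ p) * pd 2 Λ₁ p * pd 2 f p + I * (Δ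 p)⁻¹ * (conj (Δ p))⁻¹ ^ 2 * Λ₂ p * conj (Λ₂ p) * conj (pd 3 Δ p) * pd 3 f p + I * (Δ p)⁻¹ * (conj (Δ p))⁻¹ ^ 2 * Λ₂ p * conj (Λ₁ p) * conj (pd 3 Δ p) * pd 2 f p + I * (Δ p)⁻¹ * (conj (Δ p))⁻¹ ^ 2 * Λ₁ p * conj (Λ₂ p) * conj (pd 2 Δ p) * pd 3 f p + I * (Δ p)⁻¹ * (conj (Δ p))⁻¹ ^ 2 * Λ₁ p * conj (Λ₁ p) * conj (pd 2 Δ p) * pd 2 f p + (-1/2 : ℂ) * I * (conj (Δ p)) * (conj (Δ p))⁻¹ ^ 2 * conj (pd 0 Λ₂ p) * pd 3 f p + (-1/2 : ℂ) * I * (conj (Δ p)) * (conj (Δ p))⁻¹ ^ 2 * conj (pd 0 Λ₁ p) * pd 2 f p + I * (conj (Δ p)) * (Δ p)⁻¹ * (conj (Δ p))⁻¹ ^ 2 * conj (Λ₂ p) * pd 3 Λ₂ p * pd 3 f p + I * (conj (Δ p)) * (Δ p)⁻¹ * (conj (Δ p))⁻¹ ^ 2 * conj (Λ₂ p) * pd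 3 Λ₁ p * pd 2 f p + I * (conj (Δ p)) * (Δ p)⁻¹ * (conj (Δ p))⁻¹ ^ 2 * conj (Λ₁ p) * pd 2 Λ₂ p * pd 3 f p + I * (conj (Δ p)) * (Δ p)⁻¹ * (conj (Δ p))⁻¹ ^ 2 * conj (Λ₁ p) * pd 2 Λ₁ p * pd 2 f p + (-1 : ℂ) * I * (conj (Δ p)) * (Δ p)⁻¹ * (conj (Δ p))⁻¹ ^ 2 * Λ₂ p * conj (pd 3 Λ₂ p) * pd 3 f p + (-1 : ℂ) * I * (conj (Δ p)) * (Δ p)⁻¹ * (conj (Δ p))⁻¹ ^ 2 * Λ₂ p * conj (pd 3 Λ₁ p) * pd 2 f p + (-1 : ℂ) * I * (conj (Δ p)) * (Δ p)⁻¹ * (conj (Δ p))⁻¹ ^ 2 * Λ₁ p * conj (pd 2 Λ₂ p) * pd 3 f p + (-1 : ℂ) * I * (conj (Δ p)) * (Δ p)⁻¹ * (conj (Δ p))⁻¹ ^ 2 * Λ₁ p * conj (pd 2 Λ₁ p) * pd 2 f p + (1/2 : ℂ) * I * (conj (Δ p)) ^ 2 * (Δ p)⁻¹ * (conj (Δ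 p))⁻¹ ^ 2 * pd 0 Λ₂ p * pd 3 f p + (1/2 : ℂ) * I * (conj (Δ p)) ^ 2 * (Δ p)⁻¹ * (conj (Δ p))⁻¹ ^ 2 * pd 0 Λ₁ p * pd 2 f p + (1/2 : ℂ) * I * (Δ p) * (Δ p)⁻¹ * (conj (Δ p))⁻¹ ^ 2 * conj (Λ₂ p) * conj (pd 0 Δ p) * pd 3 f p + (1/2 : ℂ) * I * (Δ p) * (Δ p)⁻¹ * (conj (Δ p))⁻¹ ^ 2 * conj (Λ₁ p) * conj (pd 0 Δ p) * pd 2 f p + (-1/2 : ℂ) * I * (Δ p) * (conj (Δ p)) * (Δ p)⁻¹ * (conj (Δ p))⁻¹ ^ 2 * conj (pd 0 Λ₂ p) * pd 3 f p + (-1/2 : ℂ) * I * (Δ p) * (conj (Δ p)) * (Δ p)⁻¹ * (conj (Δ p))⁻¹ ^ 2 * conj (pd 0 Λ₁ p) * pd 2 f p + (-1/2 : ℂ) * I ^ 2 * (conj (Δ p))⁻¹ ^ 2 * conj (Λ₂ p) * conj (pd 1 Δ p) * pd 3 f p + (-1/2 : ℂ) * I ^ 2 * (conj (Δ p))⁻¹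 ^ 2 * conj (Λ₁ p) * conj (pd 1 Δ p) * pd 2 f p + (-1/2 : ℂ) * I ^ 2 * (Δ p)⁻¹ * pd 1 Λ₂ p * pd 3 f p + (-1/2 : ℂ) * I ^ 2 * (Δ p)⁻¹ * pd 1 Λ₁ p * pd 2 f p + (1/2 : ℂ) * I ^ 2 * (conj (Δ p)) * (conj (Δ p))⁻¹ ^ 2 * conj (pd 1 Λ₂ p) * pd 3 f p + (1/2 : ℂ) * I ^ 2 * (conj (Δ p)) * (conj (Δ p))⁻¹ ^ 2 * conj (pd 1 Λ₁ p) * pd 2 f p + (1/2 : ℂ) * I ^ 2 * (conj (Δ p)) ^ 2 * (Δ p)⁻¹ * (conj (Δ p))⁻¹ ^ 2 * pd 1 Λ₂ p * pd 3 f p + (1/2 : ℂ) * I ^ 2 * (conj (Δ p)) ^ 2 * (Δ p)⁻¹ * (conj (Δ p))⁻¹ ^ 2 * pd 1 Λ₁ p * pd 2 f p + (-1/2 : ℂ) * I ^ 2 * (Δ p) * (Δ p)⁻¹ * (conj (Δ p))⁻¹ ^ 2 * conj (Λ₂ p) * conj (pd 1 Δ p) * pd 3 f p + (-1/2 : ℂ)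 * I ^ 2 * (Δ p) * (Δ p)⁻¹ * (conj (Δ p))⁻¹ ^ 2 * conj (Λ₁ p) * conj (pd 1 Δ p) * pd 2 f p + (1/2 : ℂ) * I ^ 2 * (Δ p) * (conj (Δ p)) * (Δ p)⁻¹ * (conj (Δ p))⁻¹ ^ 2 * conj (pd 1 Λ₂ p) * pd 3 f p + (1/2 : ℂ) * I ^ 2 * (Δ p) * (conj (Δ p)) * (Δ p)⁻¹ * (conj (Δ p))⁻¹ ^ 2 * conj (pd 1 Λ₁ p) * pd 2 f p) * hia + ((1/2 : ℂ) * I * (Δ p)⁻¹ * pd 0 Λ₂ p * pd 3 f p + (1/2 : ℂ) * I * (Δ p)⁻¹ * pd 0 Λ₁ p * pd 2 f p + I * (Δ p)⁻¹ * (conj (Δ p))⁻¹ * conj (Λ₂ p) * pd 3 Λ₂ p * pd 3 f p + I * (Δ p)⁻¹ * (conj (Δ p))⁻¹ * conj (Λ₂ p) * pd 3 Λ₁ p * pd 2 f p + I * (Δ p)⁻¹ * (conj (Δ p))⁻¹ * conj (Λ₁ p) * pd 2 Λ₂ p * pd 3 f p + I * (Δ p)⁻¹ * (conj (Δ p))⁻¹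 * conj (Λ₁ p) * pd 2 Λ₁ p * pd 2 f p + (-1/2 : ℂ) * I * (Δ p)⁻¹ ^ 2 * Λ₂ p * pd 0 Δ p * pd 3 f p + (-1/2 : ℂ) * I * (Δ p)⁻¹ ^ 2 * Λ₁ p * pd 0 Δ p * pd 2 f p + (-1 : ℂ) * I * (Δ p)⁻¹ ^ 2 * (conj (Δ p))⁻¹ * Λ₂ p * conj (Λ₂ p) * pd 3 Δ p * pd 3 f p + (-1 : ℂ) * I * (Δ p)⁻¹ ^ 2 * (conj (Δ p))⁻¹ * Λ₂ p * conj (Λ₁ p) * pd 2 Δ p * pd 3 f p + (-1 : ℂ) * I * (Δ p)⁻¹ ^ 2 * (conj (Δ p))⁻¹ * Λ₁ p * conj (Λ₂ p) * pd 3 Δ p * pd 2 f p + (-1 : ℂ) * I * (Δ p)⁻¹ ^ 2 * (conj (Δ p))⁻¹ * Λ₁ p * conj (Λ₁ p) * pd 2 Δ p * pd 2 f p + (1/2 : ℂ) * I * (conj (Δ p)) * (Δ p)⁻¹ * (conj (Δ p))⁻¹ * pd 0 Λ₂ p * pd 3 f p + (1/2 : ℂ) * I * (conj (Δ p)) * (Δ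 p)⁻¹ * (conj (Δ p))⁻¹ * pd 0 Λ₁ p * pd 2 f p + (-1/2 : ℂ) * I * (conj (Δ p)) * (Δ p)⁻¹ ^ 2 * (conj (Δ p))⁻¹ * Λ₂ p * pd 0 Δ p * pd 3 f p + (-1/2 : ℂ) * I * (conj (Δ p)) * (Δ p)⁻¹ ^ 2 * (conj (Δ p))⁻¹ * Λ₁ p * pd 0 Δ p * pd 2 f p + (1/2 : ℂ) * I ^ 2 * (Δ p)⁻¹ * pd 1 Λ₂ p * pd 3 f p + (1/2 : ℂ) * I ^ 2 * (Δ p)⁻¹ * pd 1 Λ₁ p * pd 2 f p + (-1/2 : ℂ) * I ^ 2 * (Δ p)⁻¹ ^ 2 * Λ₂ p * pd 1 Δ p * pd 3 f p + (-1/2 : ℂ) * I ^ 2 * (Δ p)⁻¹ ^ 2 * Λ₁ p * pd 1 Δ p * pd 2 f p + (1/2 : ℂ) * I ^ 2 * (conj (Δ p)) * (Δ p)⁻¹ * (conj (Δ p))⁻¹ * pd 1 Λ₂ p * pd 3 f p + (1/2 : ℂ) * I ^ 2 * (conj (Δ p)) * (Δ p)⁻¹ * (conj (Δ p))⁻¹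 * pd 1 Λ₁ p * pd 2 f p + (-1/2 : ℂ) * I ^ 2 * (conj (Δ p)) * (Δ p)⁻¹ ^ 2 * (conj (Δ p))⁻¹ * Λ₂ p * pd 1 Δ p * pd 3 f p + (-1/2 : ℂ) * I ^ 2 * (conj (Δ p)) * (Δ p)⁻¹ ^ 2 * (conj (Δ p))⁻¹ * Λ₁ p * pd 1 Δ p * pd 2 f p) * hib

end
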